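/- Let F be a family of Borel functions f : ℝ^s → ℝ with E[f(Y)²] < ∞ for every f ∈ F, and suppose F is dense, with respect to the L² norm of the distribution of Y, in the set 𝔅 = { 1_B : B a Borel subset of ℝ^s } of indicator functions; that is, for every Borel set B there is a sequence f_k ∈ F with E[(1_B(Y) − f_k(Y))²] → 0. Assume the central subspace S_{Y|X} is itself a dimension reduction subspace and, for each f ∈ F, the central mean subspace S_{E[f(Y)|X]} is itself a mean dimension reduction subspace for f. Then F characterizes the central subspace: span{ S_{E[f(Y)|X]} : f ∈ F } = S_{Y|X}. (Theorem 1.) -/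

import Mathlib

open MeasureTheory ProbabilityTheory Filter

/-- The map `x ↦ P_S x`, the orthogonal projection onto `S` viewed as a map of the
ambient Euclidean space. -/
noncomputable def projFn {p : ℕ} (S : Submodule ℝ (EuclideanSpace ℝ (Fin p))) :
    EuclideanSpace ℝ (Fin p) → EuclideanSpace ℝ (Fin p) :=
  fun v => (S.orthogonalProjectionOnto v : EuclideanSpace ℝ (Fin p))

/-- The σ-algebra `σ(P_S ∘ X)` generated by the projected random vector. -/
noncomputable def sigmaProj {Ω : Type*} {p : ℕ}
    (S : Submodule ℝ (EuclideanSpace ℝ (Fin p))) (X : Ω → EuclideanSpace ℝ (Fin p)) :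
    MeasurableSpace Ω :=
  MeasurableSpace.comap (fun ω => projFn S (X ω)) inferInstance

lemma sigmaProj_le {Ω : Type*} {p : ℕ} [mΩ : MeasurableSpace Ω]
    (S : Submodule ℝ (EuclideanSpace ℝ (Fin p))) {X : Ω → EuclideanSpace ℝ (Fin p)}
    (hX : Measurable X) : sigmaProj S X ≤ mΩ := by
  have h : Measurable (fun ω => projFn S (X ω)) := by
    have : Measurable (projFn S) :=
      (S.subtypeL.comp (S.orthogonalProjectionOnto)).continuous.measurable
    exact this.comp hX
  exact h.comap_le

/-- `S` is a dimension reduction subspace: `Y ⫫ X | σ(P_S ∘ X)`. -/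
def IsDRS {Ω : Type*} {p s : ℕ} [mΩ : MeasurableSpace Ω] [StandardBorelSpace Ω]
    (P : Measure Ω) [IsFiniteMeasure P]
    (X : Ω → EuclideanSpace ℝ (Fin p)) (Y : Ω → EuclideanSpace ℝ (Fin s))
    (hX : Measurable X) (S : Submodule ℝ (EuclideanSpace ℝ (Fin p))) : Prop :=
  CondIndep (sigmaProj S X) (MeasurableSpace.comap Y inferInstance)
    (MeasurableSpace.comap X inferInstance) (sigmaProj_le S hX) P

/-- The central subspace `S_{Y|X}`: the intersection of all dimension reduction subspaces. -/
noncomputable def centralSubspace {Ω : Type*} {p s : ℕ} [mΩ : MeasurableSpace Ω]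
    [StandardBorelSpace Ω] (P : Measure Ω) [IsFiniteMeasure P]
    (X : Ω → EuclideanSpace ℝ (Fin p)) (Y : Ω → EuclideanSpace ℝ (Fin s))
    (hX : Measurable X) : Submodule ℝ (EuclideanSpace ℝ (Fin p)) :=
  sInf {S | IsDRS P X Y hX S}

/-- `S` is a mean dimension reduction subspace for `f`:
`E[f(Y) | σ(X)] = E[f(Y) | σ(P_S ∘ X)]` a.e. -/
def IsMeanDRS {Ω : Type*} {p s : ℕ} [mΩ : MeasurableSpace Ω] (P : Measure Ω)
    (X : Ω → EuclideanSpace ℝ (Fin p)) (Y : Ω → EuclideanSpace ℝ (Fin s))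
    (f : EuclideanSpace ℝ (Fin s) → ℝ) (S : Submodule ℝ (EuclideanSpace ℝ (Fin p))) : Prop :=
  P[(fun ω => f (Y ω))|MeasurableSpace.comap X inferInstance]
    =ᵐ[P] P[(fun ω => f (Y ω))|sigmaProj S X]

/-- The central mean subspace `S_{E[f(Y)|X]}`: the intersection of all mean dimension
reduction subspaces for `f`. -/
noncomputable def centralMeanSubspace {Ω : Type*} {p s : ℕ} [mΩ : MeasurableSpace Ω]
    (P : Measure Ω) (X : Ω → EuclideanSpace ℝ (Fin p)) (Y : Ω → EuclideanSpace ℝ (Fin s))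
    (f : EuclideanSpace ℝ (Fin s) → ℝ) : Submodule ℝ (EuclideanSpace ℝ (Fin p)) :=
  sInf {S | IsMeanDRS P X Y f S}

section Auxiliary

open MeasureTheory ProbabilityTheory Filter Set

variable {Ω : Type*} [mΩ : MeasurableSpace Ω]

lemma measurable_projFn {p : ℕ} (S : Submodule ℝ (EuclideanSpace ℝ (Fin p))) :
    Measurable (projFn S) :=
  (S.subtypeL.comp (S.orthogonalProjectionOnto)).continuous.measurable

lemma sigmaProj_le_comap {p : ℕ} (S : Submodule ℝ (EuclideanSpace ℝ (Fin p)))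
    (X : Ω → EuclideanSpace ℝ (Fin p)) :
    sigmaProj S X ≤ MeasurableSpace.comap X inferInstance := by
  have : sigmaProj S X
      = MeasurableSpace.comap X (MeasurableSpace.comap (projFn S) inferInstance) := by
    rw [sigmaProj, MeasurableSpace.comap_comp]; rfl
  rw [this]
  exact MeasurableSpace.comap_mono (measurable_projFn S).comap_le

lemma sigmaProj_mono {p : ℕ} {S T : Submodule ℝ (EuclideanSpace ℝ (Fin p))} (h : S ≤ T)
    (X : Ω → EuclideanSpace ℝ (Fin p)) :
    sigmaProj S X ≤ sigmaProj T X := by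
  have hcomp : (fun ω => projFn S (X ω)) = projFn S ∘ (fun ω => projFn T (X ω)) := by
    funext ω
    simp only [Function.comp_apply, projFn]
    have := Submodule.orthogonalProjectionOnto_starProjection_of_le h (X ω)
    rw [Submodule.starProjection_apply] at this
    rw [this]
  calc sigmaProj S X
      = MeasurableSpace.comap (fun ω => projFn T (X ω))
        (MeasurableSpace.comap (projFn S) inferInstance) := by
        rw [sigmaProj, hcomp, MeasurableSpace.comap_comp]
    _ ≤ sigmaProj T X := MeasurableSpace.comap_mono (measurable_projFn S).comap_le

/-- If `vₖ → u` in `L¹` and the two conditional expectations of each `vₖ` agree, then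
the two conditional expectations of `u` agree. -/
lemma condexp_eq_condexp_of_tendstoL1
    {Ω : Type*} {m₁ m₂ : MeasurableSpace Ω} [mΩ : MeasurableSpace Ω]
    (hm₁ : m₁ ≤ mΩ) (hm₂ : m₂ ≤ mΩ)
    {P : Measure Ω} [IsProbabilityMeasure P]
    {u : Ω → ℝ} {v : ℕ → Ω → ℝ} (hu : Integrable u P) (hv : ∀ k, Integrable (v k) P)
    (hlim : Tendsto (fun k => ∫ ω, |u ω - v k ω| ∂P) atTop (nhds 0))
    (heq : ∀ k, P[v k|m₁] =ᵐ[P] P[v k|m₂]) :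
    P[u|m₁] =ᵐ[P] P[u|m₂] := by
  have hDint : Integrable (fun ω => |(P[u|m₁]) ω - (P[u|m₂]) ω|) P :=
    (integrable_condExp.sub integrable_condExp).abs
  have key : ∫ ω, |(P[u|m₁]) ω - (P[u|m₂]) ω| ∂P = 0 := by
    have hbound : ∀ k, ∫ ω, |(P[u|m₁]) ω - (P[u|m₂]) ω| ∂P
        ≤ 2 * ∫ ω, |u ω - v k ω| ∂P := by
      intro k
      have h1 : Integrable (fun ω => |(P[u - v k|m₁]) ω| + |(P[v k - u|m₂]) ω|) P :=
        integrable_condExp.abs.add integrable_condExp.abs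
      have hptwise : ∀ᵐ ω ∂P, |(P[u|m₁]) ω - (P[u|m₂]) ω|
          ≤ |(P[u - v k|m₁]) ω| + |(P[v k - u|m₂]) ω| := by
        filter_upwards [heq k, condExp_sub hu (hv k) (m := m₁),
          condExp_sub (hv k) hu (m := m₂)] with ω hk h1' h2'
        have e1 : (P[u - v k|m₁]) ω = (P[u|m₁]) ω - (P[v k|m₁]) ω := h1'
        have e2 : (P[v k - u|m₂]) ω = (P[v k|m₂]) ω - (P[u|m₂]) ω := h2'
        have : (P[u|m₁]) ω - (P[u|m₂]) ω
            = (P[u - v k|m₁]) ω + (P[v k - u|m₂]) ω := by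
          rw [e1, e2, hk]; ring
        rw [this]
        exact abs_add_le _ _
      calc ∫ ω, |(P[u|m₁]) ω - (P[u|m₂]) ω| ∂P
          ≤ ∫ ω, (|(P[u - v k|m₁]) ω| + |(P[v k - u|m₂]) ω|) ∂P :=
            integral_mono_ae hDint h1 hptwise
        _ = (∫ ω, |(P[u - v k|m₁]) ω| ∂P) + ∫ ω, |(P[v k - u|m₂]) ω| ∂P :=
            integral_add integrable_condExp.abs integrable_condExp.abs
        _ ≤ (∫ ω, |(u - v k) ω| ∂P) + ∫ ω, |(v k - u) ω| ∂P :=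
            add_le_add (integral_abs_condExp_le _) (integral_abs_condExp_le _)
        _ = 2 * ∫ ω, |u ω - v k ω| ∂P := by
            have : ∀ ω, |(v k - u) ω| = |(u - v k) ω| := fun ω => abs_sub_comm _ _
            rw [integral_congr_ae (Eventually.of_forall this)]
            simp only [Pi.sub_apply]
            ring
    have h2 : Tendsto (fun k => 2 * ∫ ω, |u ω - v k ω| ∂P) atTop (nhds 0) := by
      simpa using hlim.const_mul 2
    have hle : ∫ ω, |(P[u|m₁]) ω - (P[u|m₂]) ω| ∂P ≤ 0 := ge_of_tendsto' h2 hbound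
    have hge : 0 ≤ ∫ ω, |(P[u|m₁]) ω - (P[u|m₂]) ω| ∂P :=
      integral_nonneg fun ω => abs_nonneg _
    linarith
  have := (integral_eq_zero_iff_of_nonneg (fun ω => abs_nonneg _) hDint).mp key
  filter_upwards [this] with ω hω
  have : |(P[u|m₁]) ω - (P[u|m₂]) ω| = 0 := hω
  have := abs_eq_zero.mp this
  linarith [sub_eq_zero.mp this]

/-- If `∫ dₖ² → 0` then `∫ |dₖ| → 0` (on a probability space). -/
lemma tendsto_integral_abs_of_sq
    {P : Measure Ω} [IsProbabilityMeasure P] {d : ℕ → Ω → ℝ}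
    (hmeas : ∀ k, AEStronglyMeasurable (d k) P)
    (hsq : ∀ k, Integrable (fun ω => (d k ω) ^ 2) P)
    (hlim : Tendsto (fun k => ∫ ω, (d k ω) ^ 2 ∂P) atTop (nhds 0)) :
    Tendsto (fun k => ∫ ω, |d k ω| ∂P) atTop (nhds 0) := by
  have hdint : ∀ k, Integrable (d k) P := by
    intro k
    refine Integrable.mono' ((integrable_const (1 : ℝ)).add (hsq k)) (hmeas k) ?_
    refine Eventually.of_forall fun ω => ?_
    simp only [Pi.add_apply, Real.norm_eq_abs]
    rcases le_or_gt (|d k ω|) 1 with h | h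
    · have : (0:ℝ) ≤ (d k ω) ^ 2 := sq_nonneg _
      calc |d k ω| ≤ 1 := h
        _ ≤ 1 + (d k ω) ^ 2 := by linarith
    · have : |d k ω| ≤ (d k ω) ^ 2 := by
        nlinarith [sq_abs (d k ω), abs_nonneg (d k ω)]
      linarith
  rw [NormedAddCommGroup.tendsto_nhds_zero]
  intro ε hε
  have hev : ∀ᶠ k in atTop, ∫ ω, (d k ω) ^ 2 ∂P < ε ^ 2 / 8 :=
    hlim.eventually (gt_mem_nhds (by positivity))
  filter_upwards [hev] with k hk
  have hnonneg : 0 ≤ ∫ ω, |d k ω| ∂P := integral_nonneg fun ω => abs_nonneg _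
  rw [Real.norm_eq_abs, abs_of_nonneg hnonneg]
  have hkey : ∀ ω, |d k ω| ≤ ε / 2 + (d k ω) ^ 2 * (2 / ε) := by
    intro ω
    rw [← sub_nonneg]
    have hrw : ε / 2 + (d k ω) ^ 2 * (2 / ε) - |d k ω|
        = (2 / ε) * (ε ^ 2 / 4 + (d k ω) ^ 2 - |d k ω| * ε / 2) := by
      field_simp
      ring
    rw [hrw]
    apply mul_nonneg (by positivity)
    nlinarith [sq_nonneg (|d k ω| - ε / 2), sq_abs (d k ω), abs_nonneg (d k ω),
      mul_nonneg (abs_nonneg (d k ω)) hε.le]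
  calc ∫ ω, |d k ω| ∂P
      ≤ ∫ ω, (ε / 2 + (d k ω) ^ 2 * (2 / ε)) ∂P :=
        integral_mono (hdint k).abs
          ((integrable_const _).add ((hsq k).mul_const _)) hkey
    _ = ε / 2 + (∫ ω, (d k ω) ^ 2 ∂P) * (2 / ε) := by
        rw [integral_add (integrable_const _) ((hsq k).mul_const _),
          integral_const, integral_mul_const]
        simp
    _ < ε / 2 + (ε ^ 2 / 8) * (2 / ε) := by
        have h2ε : 0 < 2 / ε := by positivity
        have := mul_lt_mul_of_pos_right hk h2ε
        linarith
    _ ≤ ε := by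
        have : ε ^ 2 / 8 * (2 / ε) = ε / 4 := by field_simp; ring
        rw [this]; linarith

/-- If the conditional expectations w.r.t. `m₁` and `m₂` agree on all indicator functions
of the form `1_B ∘ Y`, they agree on all integrable functions of the form `f ∘ Y`. -/
lemma condexp_comp_eq_of_indicator {s : ℕ}
    {Ω : Type*} {m₁ m₂ : MeasurableSpace Ω} [mΩ : MeasurableSpace Ω]
    {P : Measure Ω} [IsProbabilityMeasure P]
    {Y : Ω → EuclideanSpace ℝ (Fin s)} (hY : Measurable Y)
    (hm₁ : m₁ ≤ mΩ) (hm₂ : m₂ ≤ mΩ)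
    (hind : ∀ B : Set (EuclideanSpace ℝ (Fin s)), MeasurableSet B →
      P[(Y ⁻¹' B).indicator (fun _ => (1:ℝ))|m₁]
        =ᵐ[P] P[(Y ⁻¹' B).indicator (fun _ => (1:ℝ))|m₂])
    {f : EuclideanSpace ℝ (Fin s) → ℝ} (hfm : Measurable f)
    (hfi : Integrable (fun ω => f (Y ω)) P) :
    P[(fun ω => f (Y ω))|m₁] =ᵐ[P] P[(fun ω => f (Y ω))|m₂] := by
  -- integrability of composed simple functions
  have hint : ∀ g : SimpleFunc (EuclideanSpace ℝ (Fin s)) ℝ,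
      Integrable (fun ω => g (Y ω)) P := by
    intro g
    obtain ⟨C, hC⟩ := g.exists_forall_norm_le
    rw [← memLp_one_iff_integrable]
    exact MemLp.of_bound ((g.measurable.comp hY).aestronglyMeasurable) C
      (Eventually.of_forall fun ω => hC (Y ω))
  -- the statement holds for composed simple functions
  have hsimple : ∀ g : SimpleFunc (EuclideanSpace ℝ (Fin s)) ℝ,
      P[(fun ω => g (Y ω))|m₁] =ᵐ[P] P[(fun ω => g (Y ω))|m₂] := by
    intro g
    refine SimpleFunc.induction (fun c B hB => ?_) (fun g₁ g₂ _ h1 h2 => ?_) g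
    · -- indicator case
      have h2 : (fun ω => (SimpleFunc.piecewise B hB (SimpleFunc.const _ c)
            (SimpleFunc.const _ 0)) (Y ω))
          = c • (Y ⁻¹' B).indicator (fun _ => (1:ℝ)) := by
        funext ω
        by_cases hω : Y ω ∈ B <;>
          simp [SimpleFunc.piecewise_apply, hω, Set.indicator, Set.mem_preimage]
      rw [h2]
      calc P[c • (Y ⁻¹' B).indicator (fun _ => (1:ℝ))|m₁]
          =ᵐ[P] c • P[(Y ⁻¹' B).indicator (fun _ => (1:ℝ))|m₁] := condExp_smul c _ _
        _ =ᵐ[P] c • P[(Y ⁻¹' B).indicator (fun _ => (1:ℝ))|m₂] := by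
            filter_upwards [hind B hB] with ω hω
            simp [hω]
        _ =ᵐ[P] P[c • (Y ⁻¹' B).indicator (fun _ => (1:ℝ))|m₂] := (condExp_smul c _ _).symm
    · -- additive case
      have hadd : (fun ω => (g₁ + g₂) (Y ω))
          = (fun ω => g₁ (Y ω)) + (fun ω => g₂ (Y ω)) := by
        funext ω; simp
      rw [hadd]
      calc P[(fun ω => g₁ (Y ω)) + (fun ω => g₂ (Y ω))|m₁]
          =ᵐ[P] P[(fun ω => g₁ (Y ω))|m₁] + P[(fun ω => g₂ (Y ω))|m₁] :=
            condExp_add (hint g₁) (hint g₂) _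
        _ =ᵐ[P] P[(fun ω => g₁ (Y ω))|m₂] + P[(fun ω => g₂ (Y ω))|m₂] := h1.add h2
        _ =ᵐ[P] P[(fun ω => g₁ (Y ω)) + (fun ω => g₂ (Y ω))|m₂] :=
            (condExp_add (hint g₁) (hint g₂) _).symm
  -- approximation by simple functions in L¹ of the pushforward measure
  haveI : IsProbabilityMeasure (P.map Y) := Measure.isProbabilityMeasure_map hY.aemeasurable
  have hfν : MemLp f 1 (P.map Y) := by
    rw [memLp_one_iff_integrable,
      integrable_map_measure hfm.aestronglyMeasurable hY.aemeasurable]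
    exact hfi
  have hex : ∀ k : ℕ, ∃ g : SimpleFunc (EuclideanSpace ℝ (Fin s)) ℝ,
      eLpNorm (f - ⇑g) 1 (P.map Y) < ENNReal.ofReal (1 / (k + 1))
        ∧ MemLp (⇑g) 1 (P.map Y) := by
    intro k
    refine hfν.exists_simpleFunc_eLpNorm_sub_lt ENNReal.one_ne_top ?_
    simp only [ne_eq, ENNReal.ofReal_eq_zero, not_le]
    positivity
  choose g hg hgmem using hex
  refine condexp_eq_condexp_of_tendstoL1 hm₁ hm₂ hfi (fun k => hint (g k)) ?_
    (fun k => hsimple (g k))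
  -- L¹ convergence
  have hb : ∀ k : ℕ, ∫ ω, |f (Y ω) - (g k) (Y ω)| ∂P ≤ 1 / (k + 1) := by
    intro k
    have hdiffint : Integrable (f - ⇑(g k)) (P.map Y) :=
      (memLp_one_iff_integrable.mp hfν).sub (memLp_one_iff_integrable.mp (hgmem k))
    have hmap : ∫ ω, |f (Y ω) - (g k) (Y ω)| ∂P
        = ∫ x, |f x - (g k) x| ∂(P.map Y) := by
      rw [integral_map hY.aemeasurable]
      exact ((hfm.sub (g k).measurable).abs.aestronglyMeasurable)
    rw [hmap]
    have h1 : ENNReal.ofReal (∫ x, ‖(f - ⇑(g k)) x‖ ∂(P.map Y))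
        = eLpNorm (f - ⇑(g k)) 1 (P.map Y) := by
      rw [ofReal_integral_norm_eq_lintegral_enorm hdiffint,
        eLpNorm_one_eq_lintegral_enorm]
    have h2 : ENNReal.ofReal (∫ x, ‖(f - ⇑(g k)) x‖ ∂(P.map Y))
        ≤ ENNReal.ofReal (1 / (k + 1)) := by
      rw [h1]; exact (hg k).le
    have h3 : ∫ x, ‖(f - ⇑(g k)) x‖ ∂(P.map Y) ≤ 1 / (k + 1) := by
      have hpos : (0:ℝ) ≤ 1 / (k + 1) := by positivity
      rwa [ENNReal.ofReal_le_ofReal_iff hpos] at h2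
    calc ∫ x, |f x - (g k) x| ∂(P.map Y)
        = ∫ x, ‖(f - ⇑(g k)) x‖ ∂(P.map Y) := by
          refine integral_congr_ae (Eventually.of_forall fun x => ?_)
          simp [Real.norm_eq_abs]
      _ ≤ 1 / (k + 1) := h3
  refine squeeze_zero (fun k => integral_nonneg fun ω => abs_nonneg _) hb ?_
  exact tendsto_one_div_add_atTop_nhds_zero_nat

/-- Forward direction: conditional independence of `mY` and `mX` given `m' ≤ mX` implies the
conditional expectations of `mY`-indicators w.r.t. `mX` and `m'` agree. -/
lemma condexp_indicator_eq_of_condIndep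
    {Ω : Type*} {mY mX m' : MeasurableSpace Ω} [mΩ : MeasurableSpace Ω]
    [StandardBorelSpace Ω]
    {P : Measure Ω} [IsProbabilityMeasure P]
    (hmX : mX ≤ mΩ) (hmY : mY ≤ mΩ)
    (hm' : m' ≤ mΩ) (hm'X : m' ≤ mX)
    (hci : CondIndep m' mY mX hm' P)
    {A : Set Ω} (hA : MeasurableSet[mY] A) :
    P[A.indicator (fun _ => (1:ℝ))|mX] =ᵐ[P] P[A.indicator (fun _ => (1:ℝ))|m'] := by
  have hciiff := (condIndep_iff m' mY mX hm' hmY hmX P).mp hci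
  have hA' : MeasurableSet A := hmY _ hA
  have hfint : Integrable (A.indicator (fun _ => (1:ℝ))) P :=
    (integrable_const (1:ℝ)).indicator hA'
  refine (ae_eq_condExp_of_forall_setIntegral_eq hmX hfint
    (fun t _ _ => integrable_condExp.integrableOn) ?_
    ((stronglyMeasurable_condExp.mono hm'X).aestronglyMeasurable)).symm
  intro t2 ht2 _
  have ht2' : MeasurableSet t2 := hmX _ ht2
  set u : Ω → ℝ := A.indicator (fun _ => (1:ℝ)) with hu_def
  set w : Ω → ℝ := t2.indicator (fun _ => (1:ℝ)) with hw_def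
  have hw_int : Integrable w P := (integrable_const (1:ℝ)).indicator ht2'
  have hw_bdd : ∀ᵐ ω ∂P, ‖w ω‖ ≤ 1 := by
    refine Eventually.of_forall fun ω => ?_
    by_cases hω : ω ∈ t2 <;> simp [hw_def, Set.indicator, hω]
  have hgw_int : Integrable ((P[u|m']) * w) P := by
    rw [mul_comm]
    exact integrable_condExp.bdd_mul hw_int.1 hw_bdd
  -- the pull-out property
  have hpull : P[(P[u|m']) * w|m'] =ᵐ[P] (P[u|m']) * P[w|m'] :=
    condExp_mul_of_stronglyMeasurable_left stronglyMeasurable_condExp hgw_int hw_int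
  -- conditional independence
  have hcieq : (P[u|m']) * P[w|m'] =ᵐ[P] P[(A ∩ t2).indicator (fun _ => (1:ℝ))|m'] :=
    (hciiff A t2 hA ht2).symm
  calc ∫ x in t2, (P[u|m']) x ∂P
      = ∫ x, ((P[u|m']) * w) x ∂P := by
        rw [← integral_indicator ht2']
        refine integral_congr_ae (Eventually.of_forall fun x => ?_)
        by_cases hx : x ∈ t2 <;> simp [hw_def, Set.indicator, hx]
    _ = ∫ x, (P[(P[u|m']) * w|m']) x ∂P := (integral_condExp hm').symm
    _ = ∫ x, ((P[u|m']) * P[w|m']) x ∂P := integral_congr_ae hpull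
    _ = ∫ x, ((A ∩ t2).indicator (fun _ => (1:ℝ))) x ∂P := by
        rw [integral_congr_ae hcieq, integral_condExp hm']
    _ = ∫ x in t2, u x ∂P := by
        rw [← integral_indicator ht2']
        refine integral_congr_ae (Eventually.of_forall fun x => ?_)
        by_cases hx1 : x ∈ A <;> by_cases hx2 : x ∈ t2 <;>
          simp [hu_def, Set.indicator, hx1, hx2]

/-- Backward direction: if the conditional expectations of all `mY`-indicators w.r.t. `mX`
and `m' ≤ mX` agree, then `mY` and `mX` are conditionally independent given `m'`. -/
lemma condIndep_of_condexp_indicator_eq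
    {Ω : Type*} {mY mX m' : MeasurableSpace Ω} [mΩ : MeasurableSpace Ω]
    [StandardBorelSpace Ω]
    {P : Measure Ω} [IsProbabilityMeasure P]
    (hmX : mX ≤ mΩ) (hmY : mY ≤ mΩ)
    (hm' : m' ≤ mΩ) (hm'X : m' ≤ mX)
    (hind : ∀ A : Set Ω, MeasurableSet[mY] A →
      P[A.indicator (fun _ => (1:ℝ))|mX] =ᵐ[P] P[A.indicator (fun _ => (1:ℝ))|m']) :
    CondIndep m' mY mX hm' P := by
  rw [condIndep_iff m' mY mX hm' hmY hmX P]
  intro t1 t2 ht1 ht2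
  have ht1' : MeasurableSet t1 := hmY _ ht1
  have ht2' : MeasurableSet t2 := hmX _ ht2
  set u : Ω → ℝ := t1.indicator (fun _ => (1:ℝ)) with hu_def
  set w : Ω → ℝ := t2.indicator (fun _ => (1:ℝ)) with hw_def
  have hu_int : Integrable u P := (integrable_const (1:ℝ)).indicator ht1'
  have hw_int : Integrable w P := (integrable_const (1:ℝ)).indicator ht2'
  have hw_bdd : ∀ᵐ ω ∂P, ‖w ω‖ ≤ 1 := by
    refine Eventually.of_forall fun ω => ?_
    by_cases hω : ω ∈ t2 <;> simp [hw_def, Set.indicator, hω]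
  have hw_sm : StronglyMeasurable[mX] w := by
    have : StronglyMeasurable[mX] (fun _ : Ω => (1:ℝ)) := stronglyMeasurable_const
    exact this.indicator ht2
  have hwu_int : Integrable (w * u) P := hu_int.bdd_mul hw_int.1 hw_bdd
  have hprod : (t1 ∩ t2).indicator (fun _ => (1:ℝ)) = w * u := by
    funext x
    by_cases hx1 : x ∈ t1 <;> by_cases hx2 : x ∈ t2 <;>
      simp [hu_def, hw_def, Set.indicator, hx1, hx2]
  have step1 : P[(t1 ∩ t2).indicator (fun _ => (1:ℝ))|m'] =ᵐ[P] P[w * u|m'] := by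
    rw [hprod]
  have step2 : P[w * u|m'] =ᵐ[P] P[P[w * u|mX]|m'] :=
    (condExp_condExp_of_le hm'X hmX).symm
  have step3 : P[P[w * u|mX]|m'] =ᵐ[P] P[w * P[u|mX]|m'] :=
    condExp_congr_ae (condExp_mul_of_stronglyMeasurable_left hw_sm hwu_int hu_int)
  have step4 : P[w * P[u|mX]|m'] =ᵐ[P] P[w * P[u|m']|m'] :=
    condExp_congr_ae (EventuallyEq.mul EventuallyEq.rfl (hind t1 ht1))
  have hcu_int : Integrable ((P[u|m']) * w) P := by
    rw [mul_comm]
    exact integrable_condExp.bdd_mul hw_int.1 hw_bdd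
  have step5 : P[w * P[u|m']|m'] =ᵐ[P] (P[u|m']) * P[w|m'] := by
    have : w * P[u|m'] = (P[u|m']) * w := mul_comm _ _
    rw [this]
    exact condExp_mul_of_stronglyMeasurable_left stronglyMeasurable_condExp hcu_int hw_int
  exact step1.trans (step2.trans (step3.trans (step4.trans step5)))

end Auxiliary

/-- Theorem 1: if `F ⊆ L²(F_Y)` is dense (in `L²` of the distribution of `Y`) in the class of
indicator functions of Borel sets, then `F` characterizes the central subspace:
`span{ S_{E[f(Y)|X]} : f ∈ F } = S_{Y|X}`. -/
theorem characterizes_centralSubspace_of_dense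
    {Ω : Type*} {p s : ℕ} [mΩ : MeasurableSpace Ω] [StandardBorelSpace Ω]
    (P : Measure Ω) [IsProbabilityMeasure P]
    (X : Ω → EuclideanSpace ℝ (Fin p)) (Y : Ω → EuclideanSpace ℝ (Fin s))
    (hX : Measurable X) (hY : Measurable Y)
    (F : Set (EuclideanSpace ℝ (Fin s) → ℝ))
    (hFmeas : ∀ f ∈ F, Measurable f)
    (hFL2 : ∀ f ∈ F, MemLp (fun ω => f (Y ω)) 2 P)
    (hdense : ∀ B : Set (EuclideanSpace ℝ (Fin s)), MeasurableSet B →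
      ∃ g : ℕ → (EuclideanSpace ℝ (Fin s) → ℝ), (∀ k, g k ∈ F) ∧
        Filter.Tendsto
          (fun k => ∫ ω, (B.indicator (fun _ => (1 : ℝ)) (Y ω) - g k (Y ω)) ^ 2 ∂P)
          Filter.atTop (nhds 0))
    (hcentral : IsDRS P X Y hX (centralSubspace P X Y hX))
    (hmean : ∀ f ∈ F, IsMeanDRS P X Y f (centralMeanSubspace P X Y f)) :
    (⨆ f ∈ F, centralMeanSubspace P X Y f) = centralSubspace P X Y hX := by
  classical
  have hmX : MeasurableSpace.comap X inferInstance ≤ mΩ := hX.comap_le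
  have hmY : MeasurableSpace.comap Y inferInstance ≤ mΩ := hY.comap_le
  set T : Submodule ℝ (EuclideanSpace ℝ (Fin p)) :=
    ⨆ f ∈ F, centralMeanSubspace P X Y f with hTdef
  have hmT : sigmaProj T X ≤ mΩ := sigmaProj_le T hX
  have hmTX : sigmaProj T X ≤ MeasurableSpace.comap X inferInstance := sigmaProj_le_comap T X
  -- indicator equality for `T`, via density
  have hindT : ∀ B : Set (EuclideanSpace ℝ (Fin s)), MeasurableSet B →
      P[(Y ⁻¹' B).indicator (fun _ => (1:ℝ))|MeasurableSpace.comap X inferInstance]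
        =ᵐ[P] P[(Y ⁻¹' B).indicator (fun _ => (1:ℝ))|sigmaProj T X] := by
    intro B hB
    obtain ⟨g, hgF, hgt⟩ := hdense B hB
    have hBind : ∀ ω, B.indicator (fun _ => (1:ℝ)) (Y ω)
        = (Y ⁻¹' B).indicator (fun _ => (1:ℝ)) ω := by
      intro ω
      by_cases hω : Y ω ∈ B <;>
        simp [Set.indicator_apply, Set.mem_preimage, hω]
    simp only [hBind] at hgt
    have huAESM : AEStronglyMeasurable ((Y ⁻¹' B).indicator (fun _ => (1:ℝ))) P :=
      (measurable_const.indicator (hY hB)).aestronglyMeasurable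
    have huL2 : MemLp ((Y ⁻¹' B).indicator (fun _ => (1:ℝ))) 2 P := by
      refine MemLp.of_bound huAESM 1 (Eventually.of_forall fun ω => ?_)
      by_cases hω : ω ∈ Y ⁻¹' B <;> simp [Set.indicator_apply, hω]
    have hu : Integrable ((Y ⁻¹' B).indicator (fun _ => (1:ℝ))) P :=
      (integrable_const (1:ℝ)).indicator (hY hB)
    have hvint : ∀ k, Integrable (fun ω => g k (Y ω)) P :=
      fun k => (hFL2 _ (hgF k)).integrable one_le_two
    refine condexp_eq_condexp_of_tendstoL1 hmX hmT hu hvint ?_ ?_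
    · -- L¹ convergence from L² convergence
      refine tendsto_integral_abs_of_sq
        (d := fun k ω => (Y ⁻¹' B).indicator (fun _ => (1:ℝ)) ω - g k (Y ω))
        (fun k => hu.1.sub (hvint k).1) (fun k => ?_) hgt
      have := (huL2.sub (hFL2 _ (hgF k))).integrable_sq
      simpa using this
    · intro k
      have hS : centralMeanSubspace P X Y (g k) ≤ T := by
        rw [hTdef]
        exact le_iSup₂ (f := fun f (_ : f ∈ F) => centralMeanSubspace P X Y f) (g k) (hgF k)
      have hm1 := hmean (g k) (hgF k)
      have hchain : P[(fun ω => g k (Y ω))|sigmaProj T X]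
          =ᵐ[P] P[(fun ω => g k (Y ω))|MeasurableSpace.comap X inferInstance] := by
        calc P[(fun ω => g k (Y ω))|sigmaProj T X]
            =ᵐ[P] P[P[(fun ω => g k (Y ω))|MeasurableSpace.comap X inferInstance]|
              sigmaProj T X] := (condExp_condExp_of_le hmTX hmX).symm
          _ =ᵐ[P] P[P[(fun ω => g k (Y ω))|
              sigmaProj (centralMeanSubspace P X Y (g k)) X]|sigmaProj T X] :=
              condExp_congr_ae hm1
          _ =ᵐ[P] P[(fun ω => g k (Y ω))|
              sigmaProj (centralMeanSubspace P X Y (g k)) X] := by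
              rw [condExp_of_stronglyMeasurable hmT
                (stronglyMeasurable_condExp.mono (sigmaProj_mono hS X)) integrable_condExp]
          _ =ᵐ[P] P[(fun ω => g k (Y ω))|MeasurableSpace.comap X inferInstance] := hm1.symm
      exact hchain.symm
  apply le_antisymm
  · -- span of the central mean subspaces is contained in the central subspace
    refine iSup₂_le fun f hf => ?_
    have hmem : IsMeanDRS P X Y f (centralSubspace P X Y hX) := by
      have hindc : ∀ B : Set (EuclideanSpace ℝ (Fin s)), MeasurableSet B →
          P[(Y ⁻¹' B).indicator (fun _ => (1:ℝ))|MeasurableSpace.comap X inferInstance]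
            =ᵐ[P] P[(Y ⁻¹' B).indicator (fun _ => (1:ℝ))|
              sigmaProj (centralSubspace P X Y hX) X] := by
        intro B hB
        exact condexp_indicator_eq_of_condIndep hmX hmY
          (sigmaProj_le _ hX) (sigmaProj_le_comap _ X) hcentral ⟨B, hB, rfl⟩
      exact condexp_comp_eq_of_indicator hY hmX (sigmaProj_le _ hX) hindc
        (hFmeas f hf) ((hFL2 f hf).integrable one_le_two)
    exact sInf_le hmem
  · -- the central subspace is contained in the span: `T` is a DRS
    have hTdrs : IsDRS P X Y hX T := by
      refine condIndep_of_condexp_indicator_eq hmX hmY hmT hmTX ?_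
      rintro A ⟨B, hB, rfl⟩
      exact hindT B hB
    exact sInf_le hTdrs
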